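/- For integers r ≥ 1 and k with 0 ≤ k < r, the minimum of r·∑_{i=1}^r (k/r - n_i)² over integers n_1, …, n_r with ∑ n_i = k equals k(r-k), attained by taking k of the n_i equal to 1 and the rest equal to 0. -/

import Mathlib

open scoped BigOperators

lemma key_expand (r k : ℕ) (hr : 0 < r) (n : Fin r → ℤ) (hsum : (∑ i, n i) = (k : ℤ)) :
    (r : ℚ) * ∑ i, ((k : ℚ) / (r : ℚ) - (n i : ℚ)) ^ 2
      = (r : ℚ) * ∑ i, ((n i : ℚ)) ^ 2 - (k : ℚ) ^ 2 := by
  have hrQ : (r : ℚ) ≠ 0 := Nat.cast_ne_zero.mpr hr.ne'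
  have hs : (∑ i, (n i : ℚ)) = (k : ℚ) := by exact_mod_cast congrArg (Int.cast : ℤ → ℚ) hsum
  have step : ∀ i : Fin r, ((k : ℚ) / (r : ℚ) - (n i : ℚ)) ^ 2
      = ((k : ℚ) / (r : ℚ)) ^ 2 - 2 * ((k : ℚ) / (r : ℚ)) * (n i : ℚ) + ((n i : ℚ)) ^ 2 :=
    fun i => by ring
  rw [Finset.sum_congr rfl fun i _ => step i, Finset.sum_add_distrib,
    Finset.sum_sub_distrib, Finset.sum_const, Finset.card_univ, Fintype.card_fin,
    ← Finset.mul_sum, hs]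
  field_simp
  have h1 : (r:ℚ)^2 * ((r:ℚ)⁻¹)^2 = 1 := by rw [← mul_pow, mul_inv_cancel₀ hrQ, one_pow]
  linear_combination (k:ℚ)^2 * h1

lemma indicator_sum (r k : ℕ) (hk : k ≤ r) :
    (∑ i : Fin r, (if (i : ℕ) < k then (1 : ℤ) else 0)) = (k : ℤ) := by
  rw [Fin.sum_univ_eq_sum_range (fun i => if i < k then (1 : ℤ) else 0)]
  have hfilter : (Finset.range r).filter (fun i => i < k) = Finset.range k := by
    ext x
    simp only [Finset.mem_filter, Finset.mem_range]
    exact ⟨fun h => h.2, fun h => ⟨lt_of_lt_of_le h hk, h⟩⟩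
  rw [Finset.sum_ite, hfilter]
  simp

lemma indicator_sq_sum (r k : ℕ) (hk : k ≤ r) :
    (∑ i : Fin r, (((if (i : ℕ) < k then (1 : ℤ) else 0 : ℤ) : ℚ)) ^ 2) = (k : ℚ) := by
  have step : ∀ i : Fin r, (((if (i : ℕ) < k then (1 : ℤ) else 0 : ℤ) : ℚ)) ^ 2
      = (((if (i : ℕ) < k then (1 : ℤ) else 0 : ℤ) : ℚ)) := fun i => by split <;> simp
  rw [Finset.sum_congr rfl fun i _ => step i, ← Int.cast_sum, indicator_sum r k hk]
  simp

theorem min_defect (r k : ℕ) (hr : 0 < r) (hk : k < r) :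
    IsLeast { x : ℚ | ∃ n : Fin r → ℤ, (∑ i, n i) = (k : ℤ) ∧
        x = (r : ℚ) * ∑ i, ((k : ℚ) / (r : ℚ) - (n i : ℚ)) ^ 2 }
      ((k : ℚ) * ((r : ℚ) - (k : ℚ))) ∧
    (r : ℚ) * ∑ i : Fin r,
        ((k : ℚ) / (r : ℚ) - (if (i : ℕ) < k then (1 : ℤ) else 0 : ℤ)) ^ 2 =
      (k : ℚ) * ((r : ℚ) - (k : ℚ)) := by
  have hsumind := indicator_sum r k hk.le
  have hval : (r : ℚ) * ∑ i : Fin r,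
        ((k : ℚ) / (r : ℚ) - (if (i : ℕ) < k then (1 : ℤ) else 0 : ℤ)) ^ 2 =
      (k : ℚ) * ((r : ℚ) - (k : ℚ)) := by
    rw [key_expand r k hr _ hsumind, indicator_sq_sum r k hk.le]
    ring
  refine ⟨⟨⟨fun i => if (i : ℕ) < k then 1 else 0, hsumind, hval.symm⟩, ?_⟩, hval⟩
  rintro x ⟨n, hsum, rfl⟩
  rw [key_expand r k hr n hsum]
  have hterm : ∀ i : Fin r, ((n i : ℚ)) ≤ ((n i : ℚ)) ^ 2 := by
    intro i
    have : n i ≤ (n i) ^ 2 := by nlinarith [sq_nonneg (n i - 1), sq_nonneg (n i)]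
    exact_mod_cast this
  have hs : (∑ i, (n i : ℚ)) = (k : ℚ) := by exact_mod_cast congrArg (Int.cast : ℤ → ℚ) hsum
  have hge : (k : ℚ) ≤ ∑ i, ((n i : ℚ)) ^ 2 := by
    rw [← hs]; exact Finset.sum_le_sum fun i _ => hterm i
  have hrQ : (0 : ℚ) < (r : ℚ) := by exact_mod_cast hr
  nlinarith [mul_le_mul_of_nonneg_left hge hrQ.le]
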